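/- Let 0 ≤ m_r ≤ d_r, 0 ≤ m_f ≤ d_f and 0 ≤ m_r′ ≤ d_r′, 0 ≤ m_f′ ≤ d_f′ be reals such that d_r ≥ d_f − m_f, d_f ≥ d_r − m_r, d_r′ ≥ d_f′ − m_f′ and d_f′ ≥ d_r′ − m_r′. Set d_r″ = min(d_r, d_r′), d_f″ = min(d_f, d_f′), m_r″ = d_r″ − max(d_r − m_r, d_r′ − m_r′), m_f″ = d_f″ − max(d_f − m_f, d_f′ − m_f′). Then the following are equivalent: (i) for every signal u, Sol_BDC^{m_r,d_r,m_f,d_f}(u) ∩ Sol_BDC^{m_r′,d_r′,m_f′,d_f′}(u) ≠ ∅; (ii) d_r″ ≥ d_f″ − m_f″ and d_f″ ≥ d_r″ − m_r″. -/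

import Mathlib

open Set

/-- A signal: a `Bool`-valued function of real time which is constant before
some `t 0` and constant on each interval `[t k, t (k+1))`, where `t` is a
strictly increasing sequence tending to `+∞`. -/
def IsSignal (x : ℝ → Bool) : Prop :=
  ∃ t : ℕ → ℝ, StrictMono t ∧ Filter.Tendsto t Filter.atTop Filter.atTop ∧
    (∀ a ∈ Set.Iio (t 0), ∀ b ∈ Set.Iio (t 0), x a = x b) ∧
    (∀ k : ℕ, ∀ s ∈ Set.Ico (t k) (t (k + 1)), x s = x (t k))

-- The infimum (logical AND) of `u` over a set `A` (true on the empty set).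
open Classical in
noncomputable def infOn (u : ℝ → Bool) (A : Set ℝ) : Bool :=
  decide (∀ ξ ∈ A, u ξ = true)

-- The supremum (logical OR) of `u` over a set `A` (false on the empty set).
open Classical in
noncomputable def supOn (u : ℝ → Bool) (A : Set ℝ) : Bool :=
  decide (∃ ξ ∈ A, u ξ = true)

-- The left limit `x(t-0)`: the constant value of `x` on `(t-ε, t)` for small `ε > 0`.
open Classical in
noncomputable def leftVal (x : ℝ → Bool) (t : ℝ) : Bool :=
  decide (∃ ε > 0, ∀ s ∈ Set.Ioo (t - ε) t, x s = true)

/-- The bounded delay condition. -/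
noncomputable def SolBDC (mr dr mf df : ℝ) (u : ℝ → Bool) : Set (ℝ → Bool) :=
  {x | IsSignal x ∧ ∀ t : ℝ,
    infOn u (Set.Icc (t - dr) (t - dr + mr)) ≤ x t ∧
    x t ≤ supOn u (Set.Icc (t - df) (t - df + mf))}

/-- The absolute inertial condition. -/
noncomputable def SolAIC (δr δf : ℝ) : Set (ℝ → Bool) :=
  {x | IsSignal x ∧ ∀ t : ℝ,
    (!leftVal x t && x t) ≤ infOn x (Set.Icc t (t + δr)) ∧
    (leftVal x t && !x t) ≤ infOn (fun ξ => !x ξ) (Set.Icc t (t + δf))}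

/-- The relative inertial condition. -/
noncomputable def SolRIC (μr δr μf δf : ℝ) (u : ℝ → Bool) : Set (ℝ → Bool) :=
  {x | IsSignal x ∧ ∀ t : ℝ,
    (!leftVal x t && x t) ≤ infOn u (Set.Icc (t - δr) (t - δr + μr)) ∧
    (leftVal x t && !x t) ≤ infOn (fun ξ => !u ξ) (Set.Icc (t - δf) (t - δf + μf))}

/-! ### Auxiliary lemmas -/

lemma bool_eq_of_iff {a b : Bool} (h : a = true ↔ b = true) : a = b := by
  cases a <;> cases b <;> simp_all

lemma infOn_eq_true_iff (u : ℝ → Bool) (A : Set ℝ) :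
    infOn u A = true ↔ ∀ ξ ∈ A, u ξ = true := by
  simp [infOn]

lemma supOn_eq_true_iff (u : ℝ → Bool) (A : Set ℝ) :
    supOn u A = true ↔ ∃ ξ ∈ A, u ξ = true := by
  simp [supOn]

/-- A signal is right-locally constant. -/
lemma signal_right {u : ℝ → Bool} (hu : IsSignal u) (r : ℝ) :
    ∃ ε > 0, ∀ s ∈ Set.Ico r (r + ε), u s = u r := by
  obtain ⟨t, hmono, htop, hpre, hpiece⟩ := hu
  rcases lt_or_ge r (t 0) with h0 | h0
  · exact ⟨t 0 - r, by linarith, fun s hs =>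
      hpre s (by simp only [Set.mem_Iio]; have := hs.2; linarith) r h0⟩
  · have hex : ∃ n, r < t n := by
      obtain ⟨n, hn⟩ := (Filter.tendsto_atTop.mp htop (r + 1)).exists
      exact ⟨n, by linarith⟩
    have hrn : r < t (Nat.find hex) := Nat.find_spec hex
    have hn0 : Nat.find hex ≠ 0 := by
      intro h; rw [h] at hrn; linarith
    obtain ⟨k, hk⟩ := Nat.exists_eq_succ_of_ne_zero hn0
    rw [hk] at hrn
    have hkr : t k ≤ r := by
      by_contra h; push_neg at h
      have := Nat.find_min hex (show k < Nat.find hex by omega)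
      exact this h
    refine ⟨t (k + 1) - r, by linarith, fun s hs => ?_⟩
    have h1 : u s = u (t k) := hpiece k s ⟨le_trans hkr hs.1, by have := hs.2; linarith⟩
    have h2 : u r = u (t k) := hpiece k r ⟨hkr, hrn⟩
    rw [h1, h2]

/-- A signal is left-locally constant (in the two-point sense). -/
lemma signal_left {u : ℝ → Bool} (hu : IsSignal u) (r : ℝ) :
    ∃ ε > 0, ∀ a ∈ Set.Ioo (r - ε) r, ∀ b ∈ Set.Ioo (r - ε) r, u a = u b := by
  obtain ⟨t, hmono, htop, hpre, hpiece⟩ := hu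
  rcases le_or_gt r (t 0) with h0 | h0
  · exact ⟨1, one_pos, fun a ha b hb =>
      hpre a (lt_of_lt_of_le ha.2 h0) b (lt_of_lt_of_le hb.2 h0)⟩
  · have hex : ∃ n, r ≤ t n := by
      obtain ⟨n, hn⟩ := (Filter.tendsto_atTop.mp htop r).exists
      exact ⟨n, hn⟩
    have hrn : r ≤ t (Nat.find hex) := Nat.find_spec hex
    have hn0 : Nat.find hex ≠ 0 := by
      intro h; rw [h] at hrn; linarith
    obtain ⟨k, hk⟩ := Nat.exists_eq_succ_of_ne_zero hn0
    rw [hk] at hrn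
    have hkr : t k < r := by
      by_contra h; push_neg at h
      have := Nat.find_min hex (show k < Nat.find hex by omega)
      exact this h
    refine ⟨r - t k, by linarith, fun a ha b hb => ?_⟩
    have h1 : u a = u (t k) := hpiece k a ⟨by have := ha.1; linarith, lt_of_lt_of_le ha.2 hrn⟩
    have h2 : u b = u (t k) := hpiece k b ⟨by have := hb.1; linarith, lt_of_lt_of_le hb.2 hrn⟩
    rw [h1, h2]

open Classical in
noncomputable def stepFn (x : ℝ → Bool) (r : ℝ) : ℝ :=
  if ∀ s, r ≤ s → x s = x r then r + 1
  else sSup {s | ∀ ξ, r ≤ ξ → ξ < s → x ξ = x r}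

lemma stepFn_spec (x : ℝ → Bool) (r : ℝ)
    (hr : ∃ ε > 0, ∀ s ∈ Set.Ico r (r + ε), x s = x r) :
    r < stepFn x r ∧ (∀ s, r ≤ s → s < stepFn x r → x s = x r) ∧
      ((∀ s, r ≤ s → x s = x r) ∨
        ∀ q, (∀ s, r ≤ s → s < q → x s = x r) → q ≤ stepFn x r) := by
  classical
  obtain ⟨ε, hε, hconst⟩ := hr
  by_cases hall : ∀ s, r ≤ s → x s = x r
  · rw [stepFn, if_pos hall]
    exact ⟨by linarith, fun s hs _ => hall s hs, Or.inl hall⟩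
  · rw [stepFn, if_neg hall]
    push_neg at hall
    obtain ⟨s0, hs0r, hs0⟩ := hall
    have hbdd : BddAbove {s | ∀ ξ, r ≤ ξ → ξ < s → x ξ = x r} := by
      refine ⟨s0, fun s hs => ?_⟩
      by_contra hlt; push_neg at hlt
      exact hs0 (hs s0 hs0r hlt)
    have hmem : (r + ε) ∈ {s | ∀ ξ, r ≤ ξ → ξ < s → x ξ = x r} :=
      fun ξ h1 h2 => hconst ξ ⟨h1, h2⟩
    refine ⟨?_, ?_, Or.inr ?_⟩
    · calc r < r + ε := by linarith
        _ ≤ _ := le_csSup hbdd hmem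
    · intro s hrs hslt
      obtain ⟨q, hq, hsq⟩ := exists_lt_of_lt_csSup ⟨_, hmem⟩ hslt
      exact hq s hrs hsq
    · intro q hq
      exact le_csSup hbdd hq

noncomputable def seqFn (x : ℝ → Bool) (T : ℝ) : ℕ → ℝ
  | 0 => T
  | n + 1 => stepFn x (seqFn x T n)

/-- A sufficient condition for being a signal. -/
lemma isSignal_of (x : ℝ → Bool)
    (hpre : ∃ T, ∀ a ∈ Set.Iio T, ∀ b ∈ Set.Iio T, x a = x b)
    (hright : ∀ t, ∃ ε > 0, ∀ s ∈ Set.Ico t (t + ε), x s = x t)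
    (hleft : ∀ t, ∃ ε > 0, ∀ a ∈ Set.Ioo (t - ε) t, ∀ b ∈ Set.Ioo (t - ε) t, x a = x b) :
    IsSignal x := by
  obtain ⟨T, hT⟩ := hpre
  have hstep := fun n => stepFn_spec x (seqFn x T n) (hright _)
  have hmono : StrictMono (seqFn x T) := strictMono_nat_of_lt_succ (fun n => (hstep n).1)
  have htop : Filter.Tendsto (seqFn x T) Filter.atTop Filter.atTop := by
    refine Filter.tendsto_atTop_atTop_of_monotone hmono.monotone ?_
    intro b
    by_contra hb; push_neg at hb
    have hbdd : BddAbove (Set.range (seqFn x T)) :=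
      ⟨b, by rintro _ ⟨n, rfl⟩; exact (hb n).le⟩
    set L := ⨆ n, seqFn x T n with hL
    have hle : ∀ n, seqFn x T n ≤ L := fun n => le_ciSup hbdd n
    have hlt : ∀ n, seqFn x T n < L := fun n => lt_of_lt_of_le (hstep n).1 (hle (n + 1))
    obtain ⟨ε, hε, hLc⟩ := hleft L
    have hδ : (0:ℝ) < min ε 1 := lt_min hε one_pos
    obtain ⟨n, hn⟩ := exists_lt_of_lt_ciSup (show L - min ε 1 < L by linarith)
    rcases (hstep n).2.2 with hcase | hcase
    · have heq : seqFn x T (n + 1) = seqFn x T n + 1 := by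
        show stepFn x (seqFn x T n) = _
        rw [stepFn, if_pos hcase]
      have h1 := hlt (n + 1)
      have h2 : min ε 1 ≤ 1 := min_le_right _ _
      rw [heq] at h1
      linarith
    · have hmem : ∀ s, seqFn x T n ≤ s → s < L → x s = x (seqFn x T n) := by
        intro s hs hsL
        have h1 : min ε 1 ≤ ε := min_le_left _ _
        exact hLc s ⟨by linarith, hsL⟩ (seqFn x T n) ⟨by linarith, hlt n⟩
      have h2 : (L:ℝ) ≤ seqFn x T (n + 1) := hcase L hmem
      have h1 := hlt (n + 1)
      linarith
  exact ⟨seqFn x T, hmono, htop, fun a ha b hb => hT a ha b hb,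
    fun k s hs => (hstep k).2.1 s hs.1 hs.2⟩

/-- Sliding infimum of a signal over a window of fixed shape is a signal. -/
lemma isSignal_slidingInf {u : ℝ → Bool} (hu : IsSignal u) (A B : ℝ) (hAB : B ≤ A) :
    IsSignal (fun t => infOn u (Set.Icc (t - A) (t - B))) := by
  classical
  obtain ⟨t0, hmono0, htop0, hpre0, hpiece0⟩ := hu
  have hu' : IsSignal u := ⟨t0, hmono0, htop0, hpre0, hpiece0⟩
  refine isSignal_of _ ?_ ?_ ?_
  · -- eventually constant on the left
    refine ⟨t0 0 + B, fun a ha b hb => ?_⟩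
    simp only [Set.mem_Iio] at ha hb
    have key : ∀ c : ℝ, c < t0 0 + B →
        (infOn u (Set.Icc (c - A) (c - B)) = true ↔ u (t0 0 - 1) = true) := by
      intro c hc
      rw [infOn_eq_true_iff]
      constructor
      · intro h
        have h2 := h (c - B) ⟨by linarith, le_refl _⟩
        rw [← h2]
        exact hpre0 (t0 0 - 1) (by simp only [Set.mem_Iio]; linarith)
          (c - B) (by simp only [Set.mem_Iio]; linarith)
      · intro h ξ hξ
        rw [← h]
        exact hpre0 ξ (by simp only [Set.mem_Iio]; have := hξ.2; linarith)
          (t0 0 - 1) (by simp only [Set.mem_Iio]; linarith)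
    exact bool_eq_of_iff ((key a ha).trans (key b hb).symm)
  · -- right-locally constant
    intro r
    obtain ⟨ε1, hε1, h1⟩ := signal_right hu' (r - A)
    obtain ⟨ε2, hε2, h2⟩ := signal_right hu' (r - B)
    refine ⟨min ε1 ε2, lt_min hε1 hε2, fun s hs => ?_⟩
    obtain ⟨hsr, hsε⟩ := hs
    have hsε1 : s < r + ε1 := lt_of_lt_of_le hsε (by have := min_le_left ε1 ε2; linarith)
    have hsε2 : s < r + ε2 := lt_of_lt_of_le hsε (by have := min_le_right ε1 ε2; linarith)
    refine bool_eq_of_iff ?_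
    rw [infOn_eq_true_iff, infOn_eq_true_iff]
    constructor
    · intro h ξ hξ
      rcases le_or_gt (s - A) ξ with hc | hc
      · exact h ξ ⟨hc, by have := hξ.2; linarith⟩
      · have e1 : u ξ = u (r - A) := h1 ξ ⟨hξ.1, by linarith⟩
        have e2 : u (s - A) = u (r - A) := h1 (s - A) ⟨by linarith, by linarith⟩
        rw [e1, ← e2]
        exact h (s - A) ⟨le_refl _, by linarith⟩
    · intro h ξ hξ
      rcases le_or_gt ξ (r - B) with hc | hc
      · exact h ξ ⟨by have := hξ.1; linarith, hc⟩
      · have e1 : u ξ = u (r - B) := h2 ξ ⟨hc.le, by have := hξ.2; linarith⟩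
        rw [e1]
        exact h (r - B) ⟨by linarith, le_refl _⟩
  · -- left-locally constant
    intro r
    obtain ⟨ε1, hε1, h1⟩ := signal_left hu' (r - A)
    obtain ⟨ε2, hε2, h2⟩ := signal_left hu' (r - B)
    set δ := min ε1 ε2 with hδdef
    have hδ1 : δ ≤ ε1 := min_le_left _ _
    have hδ2 : δ ≤ ε2 := min_le_right _ _
    refine ⟨δ, lt_min hε1 hε2, ?_⟩
    have key : ∀ a ∈ Set.Ioo (r - δ) r, ∀ b ∈ Set.Ioo (r - δ) r, a ≤ b →
        ((∀ ξ ∈ Set.Icc (a - A) (a - B), u ξ = true) ↔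
          (∀ ξ ∈ Set.Icc (b - A) (b - B), u ξ = true)) := by
      intro a ha b hb hab
      obtain ⟨ha1, ha2⟩ := ha
      obtain ⟨hb1, hb2⟩ := hb
      constructor
      · intro h ξ hξ
        rcases le_or_gt ξ (a - B) with hc | hc
        · exact h ξ ⟨by have := hξ.1; linarith, hc⟩
        · have e1 : u ξ = u (a - B) :=
            h2 ξ ⟨by linarith, by have := hξ.2; linarith⟩
              (a - B) ⟨by linarith, by linarith⟩
          rw [e1]
          exact h (a - B) ⟨by linarith, le_refl _⟩
      · intro h ξ hξ
        rcases le_or_gt (b - A) ξ with hc | hc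
        · exact h ξ ⟨hc, by have := hξ.2; linarith⟩
        · have e1 : u ξ = u (b - A) :=
            h1 ξ ⟨by have := hξ.1; linarith, by linarith⟩
              (b - A) ⟨by linarith, by linarith⟩
          rw [e1]
          exact h (b - A) ⟨le_refl _, by linarith⟩
    intro a ha b hb
    rcases le_total a b with hab | hab
    · exact bool_eq_of_iff (by rw [infOn_eq_true_iff, infOn_eq_true_iff]; exact key a ha b hb hab)
    · exact (bool_eq_of_iff (by rw [infOn_eq_true_iff, infOn_eq_true_iff]; exact key b hb a ha hab)).symm

lemma isSignal_not {x : ℝ → Bool} (h : IsSignal x) : IsSignal (fun t => !x t) := by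
  obtain ⟨t, h1, h2, h3, h4⟩ := h
  exact ⟨t, h1, h2, fun a ha b hb => congrArg (fun c => !c) (h3 a ha b hb),
    fun k s hs => congrArg (fun c => !c) (h4 k s hs)⟩

lemma supOn_eq_not_infOn_not (u : ℝ → Bool) (W : Set ℝ) :
    supOn u W = !(infOn (fun ξ => !u ξ) W) := by
  refine bool_eq_of_iff ?_
  rw [supOn_eq_true_iff, Bool.not_eq_true', Bool.eq_false_iff, Ne, infOn_eq_true_iff]
  push_neg
  constructor
  · rintro ⟨ξ, hξ, hh⟩
    exact ⟨ξ, hξ, by simp [hh]⟩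
  · rintro ⟨ξ, hξ, hh⟩
    exact ⟨ξ, hξ, by simpa using hh⟩

/-- Sliding supremum of a signal over a window of fixed shape is a signal. -/
lemma isSignal_slidingSup {u : ℝ → Bool} (hu : IsSignal u) (A B : ℝ) (hAB : B ≤ A) :
    IsSignal (fun t => supOn u (Set.Icc (t - A) (t - B))) := by
  have h := isSignal_not (isSignal_slidingInf (isSignal_not hu) A B hAB)
  have e : (fun t => supOn u (Set.Icc (t - A) (t - B))) =
      (fun t => !(infOn (fun ξ => !u ξ) (Set.Icc (t - A) (t - B)))) := by
    funext t
    exact supOn_eq_not_infOn_not u _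
  rw [e]
  exact h

theorem bdc_inter_nonempty_iff (mr dr mf df : ℝ)
    (hmr : 0 ≤ mr) (hmrdr : mr ≤ dr) (hmf : 0 ≤ mf) (hmfdf : mf ≤ df) (hcc1 : dr ≥ df - mf) (hcc2 : df ≥ dr - mr)
    (mr' dr' mf' df' : ℝ)
    (hmr' : 0 ≤ mr') (hmrdr' : mr' ≤ dr') (hmf' : 0 ≤ mf') (hmfdf' : mf' ≤ df')
    (hcc1' : dr' ≥ df' - mf') (hcc2' : df' ≥ dr' - mr')
    (dr'' df'' mr'' mf'' : ℝ)
    (hdr'' : dr'' = min dr dr') (hdf'' : df'' = min df df')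
    (hmr'' : mr'' = dr'' - max (dr - mr) (dr' - mr'))
    (hmf'' : mf'' = df'' - max (df - mf) (df' - mf')) :
    (∀ u : ℝ → Bool, IsSignal u →
        (SolBDC mr dr mf df u ∩ SolBDC mr' dr' mf' df' u).Nonempty) ↔
      (dr'' ≥ df'' - mf'' ∧ df'' ≥ dr'' - mr'') := by
  subst hdr'' hdf'' hmr'' hmf''
  constructor
  · -- (i) → (ii)
    intro h
    -- step signals used for the necessity proofs
    have hstep : ∀ c : ℝ, IsSignal (fun ξ => decide (c ≤ ξ)) := by
      intro c
      refine ⟨fun k => c + k, ?_, ?_, ?_, ?_⟩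
      · intro m n hmn
        simp only [add_lt_add_iff_left, Nat.cast_lt]
        exact hmn
      · have : Filter.Tendsto (fun k : ℕ => (k : ℝ)) Filter.atTop Filter.atTop :=
          tendsto_natCast_atTop_atTop
        simpa using Filter.tendsto_atTop_add_const_left _ c this
      · intro a ha b hb
        simp only [Nat.cast_zero, add_zero, Set.mem_Iio] at ha hb
        simp [not_le.mpr ha, not_le.mpr hb]
      · intro k s hs
        obtain ⟨hs1, _⟩ := hs
        have hs1' : c + (k:ℝ) ≤ s := hs1
        have hk : (0:ℝ) ≤ (k:ℝ) := Nat.cast_nonneg k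
        have h1 : c ≤ s := by linarith
        have h2 : c ≤ c + (k:ℝ) := by linarith
        simp [h1, h2]
    have hstep' : ∀ c : ℝ, IsSignal (fun ξ => decide (ξ < c)) := by
      intro c
      have := isSignal_not (hstep c)
      have e : (fun ξ => decide (ξ < c)) = (fun ξ => !decide (c ≤ ξ)) := by
        funext ξ
        by_cases hc : c ≤ ξ <;> simp [hc, not_le.mp, lt_iff_not_ge] <;> linarith
      rw [e]; exact this
    constructor
    · -- min dr dr' ≥ max (df-mf) (df'-mf') - (min - max) i.e. ≥ df''-mf''
      -- need: dr ≥ df' - mf' and dr' ≥ df - mf (the cross conditions)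
      have c1 : dr ≥ df' - mf' := by
        by_contra hc
        push_neg at hc
        obtain ⟨x, hx1, hx2⟩ := h (fun ξ => decide (-dr ≤ ξ)) (hstep (-dr))
        have ht : infOn (fun ξ => decide (-dr ≤ ξ)) (Set.Icc (0 - dr) (0 - dr + mr)) = true := by
          rw [infOn_eq_true_iff]
          intro ξ hξ
          have hb := hξ.1
          show decide (-dr ≤ ξ) = true
          rw [decide_eq_true_eq]
          linarith
        have hf : supOn (fun ξ => decide (-dr ≤ ξ)) (Set.Icc (0 - df') (0 - df' + mf')) = false := by
          rw [Bool.eq_false_iff, Ne, supOn_eq_true_iff]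
          push_neg
          intro ξ hξ
          have hb := hξ.2
          show ¬(decide (-dr ≤ ξ) = true)
          rw [decide_eq_true_eq]
          intro hcon
          linarith
        have h1 := (hx1.2 0).1
        have h2 := (hx2.2 0).2
        rw [ht] at h1
        rw [hf] at h2
        exact absurd (le_trans h1 h2) (by decide)
      have c2 : dr' ≥ df - mf := by
        by_contra hc
        push_neg at hc
        obtain ⟨x, hx1, hx2⟩ := h (fun ξ => decide (-dr' ≤ ξ)) (hstep (-dr'))
        have ht : infOn (fun ξ => decide (-dr' ≤ ξ)) (Set.Icc (0 - dr') (0 - dr' + mr')) = true := by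
          rw [infOn_eq_true_iff]
          intro ξ hξ
          have hb := hξ.1
          show decide (-dr' ≤ ξ) = true
          rw [decide_eq_true_eq]
          linarith
        have hf : supOn (fun ξ => decide (-dr' ≤ ξ)) (Set.Icc (0 - df) (0 - df + mf)) = false := by
          rw [Bool.eq_false_iff, Ne, supOn_eq_true_iff]
          push_neg
          intro ξ hξ
          have hb := hξ.2
          show ¬(decide (-dr' ≤ ξ) = true)
          rw [decide_eq_true_eq]
          intro hcon
          linarith
        have h1 := (hx2.2 0).1
        have h2 := (hx1.2 0).2
        rw [ht] at h1
        rw [hf] at h2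
        exact absurd (le_trans h1 h2) (by decide)
      have e : min df df' - (min df df' - max (df - mf) (df' - mf')) = max (df - mf) (df' - mf') := by ring
      rw [ge_iff_le, e, max_le_iff, le_min_iff, le_min_iff]
      exact ⟨⟨by linarith, by linarith⟩, ⟨by linarith, by linarith⟩⟩
    · -- min df df' ≥ max (dr-mr) (dr'-mr')
      have c1 : df ≥ dr' - mr' := by
        by_contra hc
        push_neg at hc
        obtain ⟨x, hx1, hx2⟩ := h (fun ξ => decide (ξ < -df)) (hstep' (-df))
        have ht : infOn (fun ξ => decide (ξ < -df)) (Set.Icc (0 - dr') (0 - dr' + mr')) = true := by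
          rw [infOn_eq_true_iff]
          intro ξ hξ
          have hb := hξ.2
          show decide (ξ < -df) = true
          rw [decide_eq_true_eq]
          linarith
        have hf : supOn (fun ξ => decide (ξ < -df)) (Set.Icc (0 - df) (0 - df + mf)) = false := by
          rw [Bool.eq_false_iff, Ne, supOn_eq_true_iff]
          push_neg
          intro ξ hξ
          have hb := hξ.1
          show ¬(decide (ξ < -df) = true)
          rw [decide_eq_true_eq]
          intro hcon
          linarith
        have h1 := (hx2.2 0).1
        have h2 := (hx1.2 0).2
        rw [ht] at h1
        rw [hf] at h2
        exact absurd (le_trans h1 h2) (by decide)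
      have c2 : df' ≥ dr - mr := by
        by_contra hc
        push_neg at hc
        obtain ⟨x, hx1, hx2⟩ := h (fun ξ => decide (ξ < -df')) (hstep' (-df'))
        have ht : infOn (fun ξ => decide (ξ < -df')) (Set.Icc (0 - dr) (0 - dr + mr)) = true := by
          rw [infOn_eq_true_iff]
          intro ξ hξ
          have hb := hξ.2
          show decide (ξ < -df') = true
          rw [decide_eq_true_eq]
          linarith
        have hf : supOn (fun ξ => decide (ξ < -df')) (Set.Icc (0 - df') (0 - df' + mf')) = false := by
          rw [Bool.eq_false_iff, Ne, supOn_eq_true_iff]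
          push_neg
          intro ξ hξ
          have hb := hξ.1
          show ¬(decide (ξ < -df') = true)
          rw [decide_eq_true_eq]
          intro hcon
          linarith
        have h1 := (hx1.2 0).1
        have h2 := (hx2.2 0).2
        rw [ht] at h1
        rw [hf] at h2
        exact absurd (le_trans h1 h2) (by decide)
      have e : min dr dr' - (min dr dr' - max (dr - mr) (dr' - mr')) = max (dr - mr) (dr' - mr') := by ring
      rw [ge_iff_le, e, max_le_iff, le_min_iff, le_min_iff]
      exact ⟨⟨by linarith, by linarith⟩, ⟨by linarith, by linarith⟩⟩
  · -- (ii) → (i)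
    rintro ⟨h1, h2⟩ u hu
    have h1' : max (df - mf) (df' - mf') ≤ min dr dr' := by
      have e : min df df' - (min df df' - max (df - mf) (df' - mf')) = max (df - mf) (df' - mf') := by ring
      rw [ge_iff_le, e] at h1
      exact h1
    have h2' : max (dr - mr) (dr' - mr') ≤ min df df' := by
      have e : min dr dr' - (min dr dr' - max (dr - mr) (dr' - mr')) = max (dr - mr) (dr' - mr') := by ring
      rw [ge_iff_le, e] at h2
      exact h2
    rcases le_or_gt (max (dr - mr) (dr' - mr')) (min dr dr') with hcase | hcase
    · -- rising windows intersect: use sliding infimum with A = min dr dr', B = max (dr-mr) (dr'-mr')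
      set A := min dr dr' with hA
      set B := max (dr - mr) (dr' - mr') with hB
      refine ⟨fun t => infOn u (Set.Icc (t - A) (t - B)), ?_, ?_⟩ <;>
        refine ⟨isSignal_slidingInf hu A B hcase, fun t => ⟨?_, ?_⟩⟩
      · -- infOn over [t-dr, t-dr+mr] ≤ x t
        rw [Bool.le_iff_imp]
        rw [infOn_eq_true_iff, infOn_eq_true_iff]
        intro hh ξ hξ
        refine hh ξ ⟨?_, ?_⟩
        · have hA1 : A ≤ dr := min_le_left _ _
          have := hξ.1
          linarith
        · have hB1 : dr - mr ≤ B := le_max_left _ _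
          have := hξ.2
          linarith
      · -- x t ≤ supOn over [t-df, t-df+mf]
        rw [Bool.le_iff_imp]
        rw [infOn_eq_true_iff, supOn_eq_true_iff]
        intro hh
        refine ⟨max (t - A) (t - df), ⟨le_max_right _ _, ?_⟩, ?_⟩
        · rw [max_le_iff]
          have hd1 : df - mf ≤ A := le_trans (le_max_left _ _) h1'
          constructor
          · linarith
          · linarith
        · refine hh _ ⟨le_max_left _ _, ?_⟩
          rw [max_le_iff]
          have hd2 : B ≤ df := le_trans h2' (min_le_left _ _)
          constructor
          · linarith
          · linarith
      · -- primed lower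
        rw [Bool.le_iff_imp]
        rw [infOn_eq_true_iff, infOn_eq_true_iff]
        intro hh ξ hξ
        refine hh ξ ⟨?_, ?_⟩
        · have hA1 : A ≤ dr' := min_le_right _ _
          have := hξ.1
          linarith
        · have hB1 : dr' - mr' ≤ B := le_max_right _ _
          have := hξ.2
          linarith
      · -- primed upper
        rw [Bool.le_iff_imp]
        rw [infOn_eq_true_iff, supOn_eq_true_iff]
        intro hh
        refine ⟨max (t - A) (t - df'), ⟨le_max_right _ _, ?_⟩, ?_⟩
        · rw [max_le_iff]
          have hd1 : df' - mf' ≤ A := le_trans (le_max_right _ _) h1'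
          constructor
          · linarith
          · linarith
        · refine hh _ ⟨le_max_left _ _, ?_⟩
          rw [max_le_iff]
          have hd2 : B ≤ df' := le_trans h2' (min_le_right _ _)
          constructor
          · linarith
          · linarith
    · -- otherwise the falling windows intersect: min df df' ≥ max (df-mf)(df'-mf')
      have hcase2 : max (df - mf) (df' - mf') ≤ min df df' := by
        have hx1 : min df df' ≥ max (dr - mr) (dr' - mr') := h2'
        have hx2 : min dr dr' ≥ max (df - mf) (df' - mf') := h1'
        -- from hcase : min dr dr' < max (dr-mr)(dr'-mr') ≤ min df df'
        calc max (df - mf) (df' - mf') ≤ min dr dr' := hx2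
          _ ≤ max (dr - mr) (dr' - mr') := hcase.le
          _ ≤ min df df' := hx1
      set A := min df df' with hA
      set B := max (df - mf) (df' - mf') with hB
      refine ⟨fun t => supOn u (Set.Icc (t - A) (t - B)), ?_, ?_⟩ <;>
        refine ⟨isSignal_slidingSup hu A B hcase2, fun t => ⟨?_, ?_⟩⟩
      · -- lower: infOn [t-dr, t-dr+mr] ≤ sup window (they intersect)
        rw [Bool.le_iff_imp]
        rw [infOn_eq_true_iff, supOn_eq_true_iff]
        intro hh
        refine ⟨max (t - A) (t - dr), ⟨le_max_left _ _, ?_⟩, ?_⟩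
        · rw [max_le_iff]
          have hd2 : B ≤ dr := le_trans h1' (min_le_left _ _)
          constructor
          · linarith
          · linarith
        · refine hh _ ⟨le_max_right _ _, ?_⟩
          rw [max_le_iff]
          have hd1 : dr - mr ≤ A := le_trans (le_max_left _ _) h2'
          constructor
          · linarith
          · linarith
      · -- upper: sup window ≤ supOn [t-df, t-df+mf]
        rw [Bool.le_iff_imp]
        rw [supOn_eq_true_iff, supOn_eq_true_iff]
        rintro ⟨ξ, hξ, hξ2⟩
        refine ⟨ξ, ⟨?_, ?_⟩, hξ2⟩
        · have hA1 : A ≤ df := min_le_left _ _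
          have := hξ.1
          linarith
        · have hB1 : df - mf ≤ B := le_max_left _ _
          have := hξ.2
          linarith
      · -- primed lower
        rw [Bool.le_iff_imp]
        rw [infOn_eq_true_iff, supOn_eq_true_iff]
        intro hh
        refine ⟨max (t - A) (t - dr'), ⟨le_max_left _ _, ?_⟩, ?_⟩
        · rw [max_le_iff]
          have hd2 : B ≤ dr' := le_trans h1' (min_le_right _ _)
          constructor
          · linarith
          · linarith
        · refine hh _ ⟨le_max_right _ _, ?_⟩
          rw [max_le_iff]
          have hd1 : dr' - mr' ≤ A := le_trans (le_max_right _ _) h2'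
          constructor
          · linarith
          · linarith
      · -- primed upper
        rw [Bool.le_iff_imp]
        rw [supOn_eq_true_iff, supOn_eq_true_iff]
        rintro ⟨ξ, hξ, hξ2⟩
        refine ⟨ξ, ⟨?_, ?_⟩, hξ2⟩
        · have hA1 : A ≤ df' := min_le_right _ _
          have := hξ.1
          linarith
        · have hB1 : df' - mf' ≤ B := le_max_right _ _
          have := hξ.2
          linarith
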